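/- Any 2→1 hypergraph H on a finite vertex set in which no two hyperedges intersect in exactly one vertex that is a tail-vertex of both of them, and which is linear (any two hyperedges share at most one vertex), admits a proper 2-coloring. -/
import Mathlib


/-- A linear `2→1` hypergraph (distinct hyperedges share at most one vertex) in which
no two hyperedges intersect in exactly one vertex that is a tail-vertex of both
admits a proper 2-coloring. -/
theorem stmt17 {V : Type*} [Fintype V] [DecidableEq V]
    (E : Finset (Finset V × V))
    (hedge : ∀ e ∈ E, e.1.card = 2 ∧ e.2 ∉ e.1)
    (hlin : ∀ e₁ ∈ E, ∀ e₂ ∈ E, e₁ ≠ e₂ →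
      ((insert e₁.2 e₁.1) ∩ (insert e₂.2 e₂.1)).card ≤ 1)
    (hint : ∀ e₁ ∈ E, ∀ e₂ ∈ E, ∀ v : V,
      (insert e₁.2 e₁.1) ∩ (insert e₂.2 e₂.1) = {v} → ¬ (v ∈ e₁.1 ∧ v ∈ e₂.1)) :
    ∃ f : V → Bool, ∀ e ∈ E,
      ∃ u ∈ insert e.2 e.1, ∃ w ∈ insert e.2 e.1, f u ≠ f w := by
  classical
  set g : V → ℕ := fun v => (Fintype.equivFin V v : ℕ) with hg
  have hginj : Function.Injective g := by
    intro a b h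
    exact (Fintype.equivFin V).injective (Fin.ext h)
  -- a vertex lies in the tail of at most one edge
  have htail : ∀ e₁ ∈ E, ∀ e₂ ∈ E, ∀ v : V, v ∈ e₁.1 → v ∈ e₂.1 → e₁ = e₂ := by
    intro e₁ h₁ e₂ h₂ v hv₁ hv₂
    by_contra hne
    have hv : v ∈ (insert e₁.2 e₁.1) ∩ (insert e₂.2 e₂.1) :=
      Finset.mem_inter.mpr ⟨Finset.mem_insert_of_mem hv₁, Finset.mem_insert_of_mem hv₂⟩
    have hcard := hlin e₁ h₁ e₂ h₂ hne
    have hsing : (insert e₁.2 e₁.1) ∩ (insert e₂.2 e₂.1) = {v} := by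
      apply Finset.eq_singleton_iff_unique_mem.mpr
      refine ⟨hv, fun w hw => Finset.card_le_one.mp hcard w hw v hv⟩
    exact hint e₁ h₁ e₂ h₂ v hsing ⟨hv₁, hv₂⟩
  refine ⟨fun v => decide (∃ e ∈ E, v ∈ e.1 ∧ ∀ w ∈ e.1, g v ≤ g w), ?_⟩
  intro e he
  obtain ⟨hcard, _⟩ := hedge e he
  obtain ⟨a, b, hab, habe⟩ := Finset.card_eq_two.mp hcard
  have key : ∀ x y : V, x ∈ e.1 → y ∈ e.1 → g x < g y →
      (∀ w ∈ e.1, g x ≤ g w) →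
      ∃ u ∈ insert e.2 e.1, ∃ w ∈ insert e.2 e.1,
        (decide (∃ e' ∈ E, u ∈ e'.1 ∧ ∀ w' ∈ e'.1, g u ≤ g w')) ≠
        (decide (∃ e' ∈ E, w ∈ e'.1 ∧ ∀ w' ∈ e'.1, g w ≤ g w')) := by
    intro x y hx hy hlt hmin
    refine ⟨x, Finset.mem_insert_of_mem hx, y, Finset.mem_insert_of_mem hy, ?_⟩
    have hxT : (∃ e' ∈ E, x ∈ e'.1 ∧ ∀ w' ∈ e'.1, g x ≤ g w') := ⟨e, he, hx, hmin⟩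
    have hyF : ¬ (∃ e' ∈ E, y ∈ e'.1 ∧ ∀ w' ∈ e'.1, g y ≤ g w') := by
      rintro ⟨e', he', hy', hmin'⟩
      have : e' = e := htail e' he' e he y hy' hy
      subst this
      exact absurd (hmin' x hx) (not_le.mpr hlt)
    simp [hxT, hyF]
  have hne : g a ≠ g b := fun h => hab (hginj h)
  have hmema : a ∈ e.1 := by rw [habe]; exact Finset.mem_insert_self _ _
  have hmemb : b ∈ e.1 := by rw [habe]; simp
  rcases lt_or_gt_of_ne hne with h | h
  · exact key a b hmema hmemb h (by
      intro w hw
      rw [habe] at hw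
      rcases Finset.mem_insert.mp hw with rfl | hw
      · exact le_refl _
      · rw [Finset.mem_singleton.mp hw]; exact le_of_lt h)
  · exact key b a hmemb hmema h (by
      intro w hw
      rw [habe] at hw
      rcases Finset.mem_insert.mp hw with rfl | hw
      · exact le_of_lt h
      · rw [Finset.mem_singleton.mp hw])
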